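/- Let M be a unitary right 𝕜𝒢-module over an ample groupoid 𝒢. For x in the unit space, define the stalk M_x as the direct limit of the corners M(U) = Mχ_U over compact open neighborhoods U of x, with transition maps m ↦ mχ_V for V ⊆ U. For each arrow g : y → x and compact open bisection U containing g, the map R_g([m]_x) = [mχ_U]_y is well-defined (independent of the choice of U and of representative m) and 𝕜-linear, and satisfies R_h ∘ R_g = R_{gh} for composable (g,h) and R_x = id on M_x for units x. -/

import Mathlib

open Set

structure TopGroupoid (Γ : Type) [TopologicalSpace Γ] where
  d : Γ → Γ
  r : Γ → Γ
  mul : Γ → Γ → Γ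
  inv : Γ → Γ
  r_d : ∀ g, r (d g) = d g
  d_r : ∀ g, d (r g) = r g
  d_mul : ∀ g h, d g = r h → d (mul g h) = d h
  r_mul : ∀ g h, d g = r h → r (mul g h) = r g
  mul_assoc : ∀ g h k, d g = r h → d h = r k → mul (mul g h) k = mul g (mul h k)
  mul_d : ∀ g, mul g (d g) = g
  r_mul_self : ∀ g, mul (r g) g = g
  d_inv : ∀ g, d (inv g) = r g
  r_inv : ∀ g, r (inv g) = d g
  mul_inv : ∀ g, mul g (inv g) = r g
  inv_mul : ∀ g, mul (inv g) g = d g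
  continuous_d : Continuous d
  continuous_r : Continuous r
  continuous_inv : Continuous inv
  continuous_mul : ContinuousOn (fun p : Γ × Γ => mul p.1 p.2) {p | d p.1 = r p.2}

namespace TopGroupoid

variable {Γ : Type} [TopologicalSpace Γ] (G : TopGroupoid Γ)

/-- The unit space, identified with its image in the arrow space. -/
def units : Set Γ := Set.range G.d

/-- `f` restricted to `U` is a homeomorphism onto its (open) image. -/
def IsPartialHomeoOn (f : Γ → Γ) (U : Set Γ) : Prop :=
  Set.InjOn f U ∧ IsOpen (f '' U) ∧ ∀ V, V ⊆ U → IsOpen V → IsOpen (f '' V)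

/-- A local bisection: an open set on which both `d` and `r` restrict to
homeomorphisms onto their images. -/
def IsBisection (U : Set Γ) : Prop :=
  IsOpen U ∧ IsPartialHomeoOn G.d U ∧ IsPartialHomeoOn G.r U

/-- The groupoid is étale: the domain map is a local homeomorphism. -/
def Etale : Prop := ∀ g : Γ, ∃ U, g ∈ U ∧ IsOpen U ∧ IsPartialHomeoOn G.d U

/-- Setwise product of subsets of the arrow space. -/
def bisMul (U V : Set Γ) : Set Γ :=
  {k | ∃ u ∈ U, ∃ v ∈ V, G.d u = G.r v ∧ k = G.mul u v}

/-- Setwise inverse. -/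
def bisInv (U : Set Γ) : Set Γ := G.inv '' U

/-- Ample: étale, the unit space is Hausdorff and has a basis of compact open sets. -/
def Ample : Prop :=
  G.Etale ∧
    (∀ x y, x ∈ G.units → y ∈ G.units → x ≠ y →
      ∃ U V : Set Γ, IsOpen U ∧ IsOpen V ∧ x ∈ U ∧ y ∈ V ∧ U ∩ V ∩ G.units = ∅) ∧
    ∀ x ∈ G.units, ∀ W : Set Γ, IsOpen W → x ∈ W →
      ∃ K : Set Γ, K ⊆ G.units ∧ x ∈ K ∧ K ⊆ W ∧ IsOpen K ∧ IsCompact K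

/-- Convolution product of `𝕜`-valued functions on the arrow space. -/
noncomputable def conv {𝕜 : Type} [CommRing 𝕜] (f₁ f₂ : Γ → 𝕜) : Γ → 𝕜 :=
  fun g => ∑ᶠ h ∈ {h : Γ | G.d h = G.d g}, f₁ (G.mul g (G.inv h)) * f₂ h

/-- Characteristic function of a set. -/
noncomputable def chi (𝕜 : Type) [CommRing 𝕜] (U : Set Γ) : Γ → 𝕜 :=
  Set.indicator U 1

/-- The groupoid algebra `𝕜𝒢`, as the span of characteristic functions of
compact open local bisections. -/
def grpAlg (𝕜 : Type) [CommRing 𝕜] : Submodule 𝕜 (Γ → 𝕜) :=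
  Submodule.span 𝕜 {f | ∃ U : Set Γ, G.IsBisection U ∧ IsCompact U ∧ f = chi 𝕜 U}

end TopGroupoid
namespace TopGroupoid

variable {Γ : Type} [TopologicalSpace Γ] (G : TopGroupoid Γ)

lemma d_d (g : Γ) : G.d (G.d g) = G.d g := by
  have h := G.d_r (G.d g)
  rwa [G.r_d] at h

lemma unit_d {u : Γ} (hu : u ∈ G.units) : G.d u = u := by
  obtain ⟨g, rfl⟩ := hu; exact G.d_d g

lemma unit_r {u : Γ} (hu : u ∈ G.units) : G.r u = u := by
  obtain ⟨g, rfl⟩ := hu; exact G.r_d g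

lemma d_mem_units (g : Γ) : G.d g ∈ G.units := ⟨g, rfl⟩

/-- `(g h⁻¹) h = g` when `d h = d g`. -/
lemma mul_inv_cancel_right {g h : Γ} (hd : G.d h = G.d g) :
    G.mul (G.mul g (G.inv h)) h = g := by
  rw [G.mul_assoc g (G.inv h) h (by rw [G.r_inv, hd]) (by rw [G.d_inv]),
    G.inv_mul, hd, G.mul_d]

/-- recover `h` from `a = g h⁻¹` : `a⁻¹ g = h` when `d h = d g`. -/
lemma recover_right {g h : Γ} (hd : G.d h = G.d g) :
    G.mul (G.inv (G.mul g (G.inv h))) g = h := by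
  set a := G.mul g (G.inv h) with ha
  have hda : G.d a = G.r h := by
    rw [ha, G.d_mul g (G.inv h) (by rw [G.r_inv, hd]), G.d_inv]
  conv_lhs => rw [← G.mul_inv_cancel_right hd]
  rw [← ha, ← G.mul_assoc (G.inv a) a h (by rw [G.d_inv]) hda,
    G.inv_mul, hda, G.r_mul_self]

lemma r_mul_inv {g h : Γ} (hd : G.d h = G.d g) :
    G.r (G.mul g (G.inv h)) = G.r g :=
  G.r_mul g (G.inv h) (by rw [G.r_inv, hd])

/-- `(u v) v⁻¹ = u` when `d u = r v`. -/
lemma mul_mul_inv {u v : Γ} (h : G.d u = G.r v) :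
    G.mul (G.mul u v) (G.inv v) = u := by
  rw [G.mul_assoc u v (G.inv v) h (by rw [G.r_inv]), G.mul_inv, ← h, G.mul_d]

lemma isBisection_mono {U V : Set Γ} (h : G.IsBisection U) (hVU : V ⊆ U)
    (hV : IsOpen V) : G.IsBisection V := by
  obtain ⟨hUo, ⟨hdi, hdo, hds⟩, ⟨hri, hro, hrs⟩⟩ := h
  exact ⟨hV, ⟨hdi.mono hVU, hds V hVU hV, fun W hW hWo => hds W (hW.trans hVU) hWo⟩,
    ⟨hri.mono hVU, hrs V hVU hV, fun W hW hWo => hrs W (hW.trans hVU) hWo⟩⟩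

lemma isBisection_of_units {K : Set Γ} (hK : K ⊆ G.units) (hO : IsOpen K) :
    G.IsBisection K := by
  have hd : ∀ V, V ⊆ K → G.d '' V = V := by
    intro V hV
    ext x
    constructor
    · rintro ⟨y, hy, rfl⟩; rwa [G.unit_d (hK (hV hy))]
    · intro hx; exact ⟨x, hx, G.unit_d (hK (hV hx))⟩
  have hr : ∀ V, V ⊆ K → G.r '' V = V := by
    intro V hV
    ext x
    constructor
    · rintro ⟨y, hy, rfl⟩; rwa [G.unit_r (hK (hV hy))]
    · intro hx; exact ⟨x, hx, G.unit_r (hK (hV hx))⟩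
  refine ⟨hO, ⟨?_, ?_, ?_⟩, ⟨?_, ?_, ?_⟩⟩
  · intro a ha b hb hab
    rwa [G.unit_d (hK ha), G.unit_d (hK hb)] at hab
  · rw [hd K le_rfl]; exact hO
  · intro V hV hVo; rw [hd V hV]; exact hVo
  · intro a ha b hb hab
    rwa [G.unit_r (hK ha), G.unit_r (hK hb)] at hab
  · rw [hr K le_rfl]; exact hO
  · intro V hV hVo; rw [hr V hV]; exact hVo

lemma chi_mem_grpAlg (𝕜 : Type) [CommRing 𝕜] {U : Set Γ} (hb : G.IsBisection U)
    (hc : IsCompact U) : chi 𝕜 U ∈ G.grpAlg 𝕜 :=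
  Submodule.subset_span ⟨U, hb, hc, rfl⟩

lemma bisMul_units_left {W S : Set Γ} (hW : W ⊆ G.units) :
    G.bisMul W S = S ∩ G.r ⁻¹' W := by
  ext k
  constructor
  · rintro ⟨u, hu, v, hv, hdr, rfl⟩
    have hu' : u = G.r v := by rw [← G.unit_d (hW hu), hdr]
    have hmv : G.mul u v = v := by rw [hu', G.r_mul_self]
    rw [hmv]
    exact ⟨hv, by rw [Set.mem_preimage, ← hu']; exact hu⟩
  · rintro ⟨hk, hrk⟩
    exact ⟨G.r k, hrk, k, hk, G.d_r k, (G.r_mul_self k).symm⟩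

lemma bisMul_units_right {S K : Set Γ} (hK : K ⊆ G.units) :
    G.bisMul S K = S ∩ G.d ⁻¹' K := by
  ext k
  constructor
  · rintro ⟨u, hu, v, hv, hdr, rfl⟩
    have hv' : G.r v = v := G.unit_r (hK hv)
    have hdk : G.d u = v := by rw [hdr, hv']
    have h2 : G.mul u v = u := by rw [← hdk, G.mul_d]
    rw [h2]
    exact ⟨hu, by rw [Set.mem_preimage, hdk]; exact hv⟩
  · rintro ⟨hk, hdk⟩
    exact ⟨k, hk, G.d k, hdk, (G.r_d k).symm, (G.mul_d k).symm⟩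

lemma compact_inter_preimage {f : Γ → Γ} {U K : Set Γ}
    (hinj : Set.InjOn f U)
    (himg : ∀ V, V ⊆ U → IsOpen V → IsOpen (f '' V)) (hUo : IsOpen U)
    (_hf : Continuous f) (hK : IsCompact K) (hKU : K ⊆ f '' U) :
    IsCompact (U ∩ f ⁻¹' K) := by
  rw [isCompact_iff_finite_subcover]
  intro ι V hVo hcover
  have hKcov : K ⊆ ⋃ i, f '' (V i ∩ U) := by
    intro k hk
    obtain ⟨u, huU, rfl⟩ := hKU hk
    have hmem : u ∈ ⋃ i, V i := hcover ⟨huU, hk⟩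
    obtain ⟨i, hi⟩ := Set.mem_iUnion.mp hmem
    exact Set.mem_iUnion.mpr ⟨i, ⟨u, ⟨hi, huU⟩, rfl⟩⟩
  obtain ⟨t, ht⟩ := hK.elim_finite_subcover (fun i => f '' (V i ∩ U))
    (fun i => himg _ inter_subset_right ((hVo i).inter hUo)) hKcov
  refine ⟨t, ?_⟩
  rintro s ⟨hsU, hsK⟩
  have hmem := ht hsK
  rw [Set.mem_iUnion₂] at hmem
  obtain ⟨i, hit, v, ⟨hvV, hvU⟩, hveq⟩ := hmem
  have hvs : v = s := hinj hvU hsU hveq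
  subst hvs
  exact Set.mem_biUnion hit hvV

lemma conv_chi_chi (𝕜 : Type) [CommRing 𝕜] {U V : Set Γ}
    (hrU : Set.InjOn G.r U) :
    G.conv (chi 𝕜 U) (chi 𝕜 V) = chi 𝕜 (G.bisMul U V) := by
  funext g
  have key : ∀ h₁ h₂ : Γ, G.d h₁ = G.d g → G.d h₂ = G.d g →
      G.mul g (G.inv h₁) ∈ U → G.mul g (G.inv h₂) ∈ U → h₁ = h₂ := by
    intro h₁ h₂ hd1 hd2 hU1 hU2
    have hr1 := G.r_mul_inv hd1
    have hr2 := G.r_mul_inv hd2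
    have heq : G.mul g (G.inv h₁) = G.mul g (G.inv h₂) :=
      hrU hU1 hU2 (hr1.trans hr2.symm)
    have hrec := G.recover_right hd1
    rw [heq, G.recover_right hd2] at hrec
    exact hrec.symm
  rw [conv, finsum_mem_def]
  set F : Γ → 𝕜 := fun h => chi 𝕜 U (G.mul g (G.inv h)) * chi 𝕜 V h with hF
  have hval : ∀ x : Γ, x ∉ {h | G.d h = G.d g} ∨ G.mul g (G.inv x) ∉ U ∨ x ∉ V →
      Set.indicator {h | G.d h = G.d g} F x = 0 := by
    rintro x (hx | hx | hx)
    · exact Set.indicator_of_notMem hx F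
    · by_cases hm : x ∈ {h | G.d h = G.d g}
      · rw [Set.indicator_of_mem hm F, hF]
        simp only [chi]
        rw [Set.indicator_of_notMem hx]; ring
      · exact Set.indicator_of_notMem hm F
    · by_cases hm : x ∈ {h | G.d h = G.d g}
      · rw [Set.indicator_of_mem hm F, hF]
        simp only [chi]
        rw [Set.indicator_of_notMem hx]; ring
      · exact Set.indicator_of_notMem hm F
  by_cases hg : g ∈ G.bisMul U V
  · obtain ⟨u, hu, v, hv, hdr, hguv⟩ := hg
    have hdv : G.d v = G.d g := by rw [hguv, G.d_mul u v hdr]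
    have huv : G.mul g (G.inv v) = u := by rw [hguv]; exact G.mul_mul_inv hdr
    rw [finsum_eq_single _ v]
    · rw [Set.indicator_of_mem (show v ∈ {h | G.d h = G.d g} from hdv) F, hF]
      simp only [chi, huv]
      rw [Set.indicator_of_mem hu, Set.indicator_of_mem hv,
        Set.indicator_of_mem (show g ∈ G.bisMul U V from ⟨u, hu, v, hv, hdr, hguv⟩)]
      simp
    · intro x hx
      apply hval
      by_cases h1 : G.d x = G.d g
      · by_cases h2 : G.mul g (G.inv x) ∈ U
        · by_cases h3 : x ∈ V
          · exact absurd (key x v h1 hdv h2 (huv ▸ hu)) hx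
          · exact Or.inr (Or.inr h3)
        · exact Or.inr (Or.inl h2)
      · exact Or.inl h1
  · rw [show chi 𝕜 (G.bisMul U V) g = 0 from Set.indicator_of_notMem hg _]
    rw [show (Set.indicator {h | G.d h = G.d g} F : Γ → 𝕜) = 0 from ?_]
    · exact finsum_zero
    funext x
    show Set.indicator {h | G.d h = G.d g} F x = 0
    apply hval
    by_cases h1 : G.d x = G.d g
    · by_cases h2 : G.mul g (G.inv x) ∈ U
      · by_cases h3 : x ∈ V
        · exact absurd ⟨_, h2, x, h3, by rw [G.d_mul g (G.inv x)
              (by rw [G.r_inv, h1]), G.d_inv],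
            (G.mul_inv_cancel_right h1).symm⟩ hg
        · exact Or.inr (Or.inr h3)
      · exact Or.inr (Or.inl h2)
    · exact Or.inl h1

end TopGroupoid
/-- Germ equality at `x`: two module elements have the same image in the stalk
`M_x = colim_{x ∈ W} Mχ_W` (the colimit over compact open neighbourhoods `W` of
`x` in the unit space, with restriction maps `m ↦ mχ_W`). -/
def germEq {Γ : Type} [TopologicalSpace Γ] (G : TopGroupoid Γ) (𝕜 : Type)
    [CommRing 𝕜] {M : Type} (act : M → (Γ → 𝕜) → M) (x : Γ) (a b : M) : Prop :=
  ∃ W : Set Γ, W ⊆ G.units ∧ IsOpen W ∧ IsCompact W ∧ x ∈ W ∧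
    act a (TopGroupoid.chi 𝕜 W) = act b (TopGroupoid.chi 𝕜 W)

open TopGroupoid in
/-- For a unitary right `𝕜𝒢`-module `M` over an ample groupoid,
and an arrow `g`, the map `R_g([m]_{r(g)}) = [mχ_U]_{d(g)}` between stalks
(for a compact open bisection `U` containing `g`) is well defined, `𝕜`-linear,
functorial for composition, and the identity on units. -/
theorem stalk_action_well_defined {Γ : Type} [TopologicalSpace Γ]
    (G : TopGroupoid Γ) (hG : G.Ample) (𝕜 : Type) [CommRing 𝕜]
    (M : Type) [AddCommGroup M] [Module 𝕜 M] (act : M → (Γ → 𝕜) → M)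
    (act_addm : ∀ m n f, act (m + n) f = act m f + act n f)
    (act_addf : ∀ m f₁ f₂, f₁ ∈ G.grpAlg 𝕜 → f₂ ∈ G.grpAlg 𝕜 →
      act m (f₁ + f₂) = act m f₁ + act m f₂)
    (act_smulm : ∀ (c : 𝕜) m f, act (c • m) f = c • act m f)
    (act_smulf : ∀ (c : 𝕜) m f, f ∈ G.grpAlg 𝕜 → act m (c • f) = c • act m f)
    (act_conv : ∀ m f₁ f₂, f₁ ∈ G.grpAlg 𝕜 → f₂ ∈ G.grpAlg 𝕜 →
      act (act m f₁) f₂ = act m (G.conv f₁ f₂))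
    (hunit : ∀ m : M, ∃ U : Set Γ, U ⊆ G.units ∧ IsOpen U ∧ IsCompact U ∧
      act m (chi 𝕜 U) = m) :
    -- well-definedness: independent of the representative and of the bisection
    (∀ (g : Γ) (m n : M) (U U' : Set Γ),
      G.IsBisection U → IsCompact U → g ∈ U →
      G.IsBisection U' → IsCompact U' → g ∈ U' →
      germEq G 𝕜 act (G.r g) m n →
      germEq G 𝕜 act (G.d g) (act m (chi 𝕜 U)) (act n (chi 𝕜 U'))) ∧
    -- 𝕜-linearity on stalks
    (∀ (g : Γ) (c : 𝕜) (m n : M) (U : Set Γ),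
      G.IsBisection U → IsCompact U → g ∈ U →
      germEq G 𝕜 act (G.d g)
        (act (m + c • n) (chi 𝕜 U)) (act m (chi 𝕜 U) + c • act n (chi 𝕜 U))) ∧
    -- R_h ∘ R_g = R_{gh} for composable arrows
    (∀ (g h : Γ) (_ : G.d g = G.r h) (m : M) (U V : Set Γ),
      G.IsBisection U → IsCompact U → g ∈ U →
      G.IsBisection V → IsCompact V → h ∈ V →
      germEq G 𝕜 act (G.d h)
        (act (act m (chi 𝕜 U)) (chi 𝕜 V)) (act m (chi 𝕜 (G.bisMul U V)))) ∧
    -- R_x is the identity on the stalk at a unit x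
    (∀ x ∈ G.units, ∀ (m : M) (W : Set Γ), W ⊆ G.units → IsOpen W →
      IsCompact W → x ∈ W → germEq G 𝕜 act x (act m (chi 𝕜 W)) m) := by
  obtain ⟨hEt, hSep, hBasis⟩ := hG
  have memU : ∀ K : Set Γ, K ⊆ G.units → IsOpen K → IsCompact K →
      chi 𝕜 K ∈ G.grpAlg 𝕜 :=
    fun K h1 h2 h3 => G.chi_mem_grpAlg 𝕜 (G.isBisection_of_units h1 h2) h3
  refine ⟨?_, ?_, ?_, ?_⟩
  · -- well-definedness
    rintro g m n U U' hU hUc hgU hU' hU'c hgU' ⟨W, hWu, hWo, hWc, hrgW, hact⟩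
    set T : Set Γ := U ∩ U' ∩ G.r ⁻¹' W with hT
    have hTo : IsOpen T := (hU.1.inter hU'.1).inter (hWo.preimage G.continuous_r)
    have hgT : g ∈ T := ⟨⟨hgU, hgU'⟩, hrgW⟩
    have hTU : T ⊆ U := fun t ht => ht.1.1
    have hTU' : T ⊆ U' := fun t ht => ht.1.2
    have hdTo : IsOpen (G.d '' T) := hU.2.1.2.2 T hTU hTo
    obtain ⟨K, hKu, hdgK, hKW, hKo, hKc⟩ := hBasis (G.d g) (G.d_mem_units g)
      (G.d '' T) hdTo ⟨g, hgT, rfl⟩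
    set S : Set Γ := T ∩ G.d ⁻¹' K with hS
    have hUK : U ∩ G.d ⁻¹' K = S := by
      apply Set.Subset.antisymm
      · rintro u ⟨huU, huK⟩
        obtain ⟨t, htT, htd⟩ := hKW huK
        have : t = u := hU.2.1.1 (hTU htT) huU htd
        exact ⟨this ▸ htT, huK⟩
      · rintro s ⟨hsT, hsK⟩
        exact ⟨hTU hsT, hsK⟩
    have hU'K : U' ∩ G.d ⁻¹' K = S := by
      apply Set.Subset.antisymm
      · rintro u ⟨huU, huK⟩
        obtain ⟨t, htT, htd⟩ := hKW huK
        have : t = u := hU'.2.1.1 (hTU' htT) huU htd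
        exact ⟨this ▸ htT, huK⟩
      · rintro s ⟨hsT, hsK⟩
        exact ⟨hTU' hsT, hsK⟩
    have hSo : IsOpen S := hTo.inter (hKo.preimage G.continuous_d)
    have hSb : G.IsBisection S :=
      G.isBisection_mono hU (fun s hs => hTU hs.1) hSo
    have hSc : IsCompact S := by
      rw [← hUK]
      exact TopGroupoid.compact_inter_preimage hU.2.1.1 hU.2.1.2.2 hU.1 G.continuous_d hKc
        (hKW.trans (Set.image_mono (f := G.d) hTU))
    have hSW : S ∩ G.r ⁻¹' W = S :=
      Set.inter_eq_left.mpr (fun s hs => hs.1.2)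
    have hWmem := memU W hWu hWo hWc
    have hKmem := memU K hKu hKo hKc
    have hSmem := G.chi_mem_grpAlg 𝕜 hSb hSc
    have hrWinj : Set.InjOn G.r W := (G.isBisection_of_units hWu hWo).2.2.1
    have hconvWS : G.conv (chi 𝕜 W) (chi 𝕜 S) = chi 𝕜 S := by
      rw [G.conv_chi_chi 𝕜 hrWinj, G.bisMul_units_left hWu, hSW]
    have hmS : act m (chi 𝕜 S) = act n (chi 𝕜 S) := by
      calc act m (chi 𝕜 S) = act (act m (chi 𝕜 W)) (chi 𝕜 S) := by
            rw [act_conv m _ _ hWmem hSmem, hconvWS]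
        _ = act (act n (chi 𝕜 W)) (chi 𝕜 S) := by rw [hact]
        _ = act n (chi 𝕜 S) := by rw [act_conv n _ _ hWmem hSmem, hconvWS]
    refine ⟨K, hKu, hKo, hKc, hdgK, ?_⟩
    rw [act_conv m _ _ (G.chi_mem_grpAlg 𝕜 hU hUc) hKmem,
      G.conv_chi_chi 𝕜 hU.2.2.1, G.bisMul_units_right hKu, hUK,
      act_conv n _ _ (G.chi_mem_grpAlg 𝕜 hU' hU'c) hKmem,
      G.conv_chi_chi 𝕜 hU'.2.2.1, G.bisMul_units_right hKu, hU'K]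
    exact hmS
  · -- linearity
    intro g c m n U hU hUc hgU
    obtain ⟨K, hKu, hxK, _, hKo, hKc⟩ := hBasis (G.d g) (G.d_mem_units g)
      Set.univ isOpen_univ trivial
    refine ⟨K, hKu, hKo, hKc, hxK, ?_⟩
    rw [show act (m + c • n) (chi 𝕜 U) =
      act m (chi 𝕜 U) + c • act n (chi 𝕜 U) by rw [act_addm, act_smulm]]
  · -- functoriality
    intro g h hgh m U V hU hUc hgU hV hVc hhV
    obtain ⟨K, hKu, hxK, _, hKo, hKc⟩ := hBasis (G.d h) (G.d_mem_units h)
      Set.univ isOpen_univ trivial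
    refine ⟨K, hKu, hKo, hKc, hxK, ?_⟩
    rw [act_conv m _ _ (G.chi_mem_grpAlg 𝕜 hU hUc) (G.chi_mem_grpAlg 𝕜 hV hVc),
      G.conv_chi_chi 𝕜 hU.2.2.1]
  · -- identity on units
    intro x hx m W hWu hWo hWc hxW
    obtain ⟨K, hKu, hxK, hKW, hKo, hKc⟩ := hBasis x hx W hWo hxW
    refine ⟨K, hKu, hKo, hKc, hxK, ?_⟩
    have hKrW : K ∩ G.r ⁻¹' W = K :=
      Set.inter_eq_left.mpr (fun k hk => by
        rw [Set.mem_preimage, G.unit_r (hKu hk)]; exact hKW hk)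
    rw [act_conv m _ _ (memU W hWu hWo hWc) (memU K hKu hKo hKc),
      G.conv_chi_chi 𝕜 (G.isBisection_of_units hWu hWo).2.2.1,
      G.bisMul_units_left hWu, hKrW]
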